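/- Let x_1,...,x_n be i.i.d. Uniform(0,1) random variables and γ, δ ∈ (0,1), γ' ∈ (0,1). Then with probability at least 1 − δ, γ minus the left γ-quantile of the empirical distribution (1/n)∑δ_{x_i} is at most min over ε ∈ (0,1) of (1−ε)^{-1}[ε|γ−γ'| + √(2γ'(1−γ')log(1/δ)/n) + (2/3 + 1/(2ε))·log(1/δ)/n]. -/

import Mathlib

set_option maxHeartbeats 1000000


open MeasureTheory ProbabilityTheory

noncomputable def Qminus (γ : ℝ) (F : ℝ → ℝ) : ℝ := sInf {x | γ ≤ F x}

noncomputable def ecdf {n : ℕ} (x : Fin n → ℝ) (t : ℝ) : ℝ :=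
  ((Finset.univ.filter (fun i => x i ≤ t)).card : ℝ) / n

lemma my_nonneg_of_deriv (f f' : ℝ → ℝ) (hd : ∀ x, HasDerivAt f (f' x) x)
    (h0 : f 0 = 0) (hf' : ∀ x, 0 ≤ x → 0 ≤ f' x) {y : ℝ} (hy : 0 ≤ y) : 0 ≤ f y := by
  have hmono : MonotoneOn f (Set.Ici (0:ℝ)) := by
    refine monotoneOn_of_deriv_nonneg (convex_Ici 0) ?_ ?_ ?_
    · exact (continuous_iff_continuousAt.2 fun x => (hd x).differentiableAt.continuousAt).continuousOn
    · intro x hx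
      exact (hd x).differentiableAt.differentiableWithinAt
    · intro x hx
      rw [(hd x).deriv]
      exact hf' x (le_of_lt (by simpa using hx))
  have := hmono (Set.self_mem_Ici) (Set.mem_Ici.2 hy) hy
  linarith [h0 ▸ this]

/-- Bernoulli mgf Bernstein bound -/
lemma bern_mgf {p l : ℝ} (hp0 : 0 ≤ p) (hp1 : p ≤ 1) (hl : 0 ≤ l) :
    1 + (Real.exp l - 1) * p ≤ Real.exp (l * p + p * (1 - p) * (Real.exp l - 1 - l)) := by
  have hD : ∀ x : ℝ, 0 < 1 + (Real.exp x - 1) * p := by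
    intro x
    nlinarith [Real.exp_pos x, mul_nonneg hp0 (Real.exp_pos x).le,
      mul_nonneg (sub_nonneg.2 hp1) (Real.exp_pos x).le]
  have key : Real.log (1 + (Real.exp l - 1) * p)
      ≤ l * p + p * (1 - p) * (Real.exp l - 1 - l) := by
    have h := my_nonneg_of_deriv
      (fun x => x * p + p * (1 - p) * (Real.exp x - 1 - x) - Real.log (1 + (Real.exp x - 1) * p))
      (fun x => p * (1 - p) * ((Real.exp x - 1) ^ 2 * p) / (1 + (Real.exp x - 1) * p))
      (fun x => ?_) (by simp)
      (fun x hx => div_nonneg (mul_nonneg (mul_nonneg hp0 (sub_nonneg.2 hp1))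
        (mul_nonneg (sq_nonneg _) hp0)) (hD x).le) hl
    · linarith
    · have h1 : HasDerivAt (fun x : ℝ => x * p) ((1:ℝ) * p) x := (hasDerivAt_id x).mul_const p
      have h2 : HasDerivAt (fun x : ℝ => p * (1 - p) * (Real.exp x - 1 - x))
          (p * (1 - p) * (Real.exp x - 1)) x :=
        ((((Real.hasDerivAt_exp x).sub_const 1).sub (hasDerivAt_id x)).const_mul
          (p * (1 - p))).congr_deriv (by ring)
      have hinner : HasDerivAt (fun x : ℝ => 1 + (Real.exp x - 1) * p)
          (Real.exp x * p) x := by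
        have := (((Real.hasDerivAt_exp x).sub_const 1).mul_const p).const_add (1:ℝ)
        exact this
      have h3 : HasDerivAt (fun x : ℝ => Real.log (1 + (Real.exp x - 1) * p))
          (Real.exp x * p / (1 + (Real.exp x - 1) * p)) x := hinner.log (hD x).ne'
      refine ((h1.add h2).sub h3).congr_deriv ?_
      have hDx := hD x
      have key : Real.exp x * p / (1 + (Real.exp x - 1) * p) * (1 + (Real.exp x - 1) * p)
          = Real.exp x * p := div_mul_cancel₀ _ hDx.ne'
      rw [eq_div_iff hDx.ne']
      linear_combination (-1 : ℝ) * key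
  calc 1 + (Real.exp l - 1) * p = Real.exp (Real.log (1 + (Real.exp l - 1) * p)) :=
        (Real.exp_log (hD l)).symm
    _ ≤ _ := Real.exp_le_exp.2 key

/-- (3-λ)(e^λ-1-λ) ≤ 3λ²/2 for λ ≥ 0 -/
lemma expand_bound {l : ℝ} (hl : 0 ≤ l) :
    (3 - l) * (Real.exp l - 1 - l) ≤ 3 * l ^ 2 / 2 := by
  have hH : ∀ y : ℝ, 0 ≤ y → 0 ≤ 1 + (y - 1) * Real.exp y := by
    intro y hy
    refine my_nonneg_of_deriv (fun x => 1 + (x - 1) * Real.exp x) (fun x => x * Real.exp x)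
      (fun x => ?_) (by simp) (fun x hx => by positivity) hy
    have h1 : HasDerivAt (fun x : ℝ => (x - 1) * Real.exp x)
        ((1 : ℝ) * Real.exp x + (x - 1) * Real.exp x) x :=
      ((hasDerivAt_id x).sub_const 1).mul (Real.hasDerivAt_exp x)
    exact ((hasDerivAt_const x (1:ℝ)).add h1).congr_deriv (by ring)
  have hG : ∀ y : ℝ, 0 ≤ y → 0 ≤ y + 2 + (y - 2) * Real.exp y := by
    intro y hy
    refine my_nonneg_of_deriv (fun x => x + 2 + (x - 2) * Real.exp x)
      (fun x => 1 + (x - 1) * Real.exp x) (fun x => ?_) (by simp) hH hy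
    have h1 : HasDerivAt (fun x : ℝ => (x - 2) * Real.exp x)
        ((1 : ℝ) * Real.exp x + (x - 2) * Real.exp x) x :=
      ((hasDerivAt_id x).sub_const 2).mul (Real.hasDerivAt_exp x)
    exact (((hasDerivAt_id x).add_const 2).add h1).congr_deriv (by ring)
  have hF : 0 ≤ 3 * l ^ 2 / 2 - (3 - l) * (Real.exp l - 1 - l) := by
    refine my_nonneg_of_deriv (fun x => 3 * x ^ 2 / 2 - (3 - x) * (Real.exp x - 1 - x))
      (fun x => x + 2 + (x - 2) * Real.exp x) (fun x => ?_) (by simp) hG hl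
    have h1 : HasDerivAt (fun x : ℝ => 3 * x ^ 2 / 2) (3 * (2 * x ^ 1) / 2) x :=
      ((hasDerivAt_pow 2 x).const_mul 3).div_const 2
    have h2 : HasDerivAt (fun x : ℝ => (3 - x) * (Real.exp x - 1 - x))
        ((0 - 1) * (Real.exp x - 1 - x) + (3 - x) * (Real.exp x - 1)) x :=
      (((hasDerivAt_const x (3:ℝ)).sub (hasDerivAt_id x))).mul
        (((Real.hasDerivAt_exp x).sub_const 1).sub ((hasDerivAt_id x)))
    exact (h1.sub h2).congr_deriv (by ring)
  linarith

lemma bernstein_core {Ω : Type*} [MeasurableSpace Ω] (μ : Measure Ω) [IsProbabilityMeasure μ]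
    {n : ℕ} (hn : 0 < n) (x : Fin n → Ω → ℝ)
    (hmeas : ∀ i, Measurable (x i))
    (hind : iIndepFun x μ)
    (hunif : ∀ i, Measure.map (x i) μ = volume.restrict (Set.Ioo (0 : ℝ) 1))
    {γ c : ℝ} (hc0 : 0 < c) (hc1 : c < 1) (hcγ : c < γ) :
    (μ {ω | γ ≤ ecdf (fun i => x i ω) c}).toReal ≤
      Real.exp (-((n : ℝ) * (γ - c) ^ 2) / (2 * (c * (1 - c) + (γ - c) / 3))) := by
  set N : ℝ := (n : ℝ) with hN
  have hNpos : 0 < N := by rw [hN]; exact_mod_cast hn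
  set s : ℝ := γ - c with hsdef
  have hspos : 0 < s := by simp [hsdef]; linarith
  set v : ℝ := c * (1 - c) with hvdef
  have hvpos : 0 < v := by apply mul_pos hc0; linarith
  set w : ℝ := v + s / 3 with hwdef
  have hwpos : 0 < w := by positivity
  set l : ℝ := s / w with hldef
  have hlpos : 0 < l := by positivity
  -- the indicator variables
  set Y : Fin n → Ω → ℝ := fun i ω => if x i ω ≤ c then 1 else 0 with hYdef
  have hYmeas : ∀ i, Measurable (Y i) := by
    intro i
    exact Measurable.ite ((hmeas i) measurableSet_Iic) measurable_const measurable_const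
  have hYind : iIndepFun Y μ := by
    have := hind.comp (fun _ r => if r ≤ c then (1:ℝ) else 0)
      (fun _ => Measurable.ite measurableSet_Iic measurable_const measurable_const)
    exact this
  set X : Ω → ℝ := ∑ i, Y i with hXdef
  have hXapp : ∀ ω, X ω = ∑ i, Y i ω := by
    intro ω; simp [hXdef]
  have hXmeas : Measurable X := by
    have : X = fun ω => ∑ i, Y i ω := funext hXapp
    rw [this]
    exact Finset.measurable_sum _ fun i _ => hYmeas i
  have hXle : ∀ ω, X ω ≤ N := by
    intro ω
    rw [hXapp]
    calc ∑ i, Y i ω ≤ ∑ _i : Fin n, (1:ℝ) := by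
          apply Finset.sum_le_sum
          intro i _
          simp only [hYdef]
          split <;> norm_num
      _ = N := by simp [hN]
  -- event identification
  have hevent : {ω | γ ≤ ecdf (fun i => x i ω) c} = {ω | γ * N ≤ X ω} := by
    ext ω
    simp only [Set.mem_setOf_eq, ecdf, hXapp, hYdef, Finset.sum_boole, Nat.cast_id]
    rw [le_div_iff₀ hNpos]
  -- integrability
  have hint : ∀ (t : ℝ), 0 ≤ t → Integrable (fun ω => Real.exp (t * X ω)) μ := by
    intro t ht
    refine (integrable_const (Real.exp (t * N))).mono'
      ((hXmeas.const_mul t).exp.aestronglyMeasurable) (ae_of_all _ fun ω => ?_)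
    rw [Real.norm_eq_abs, abs_of_pos (Real.exp_pos _)]
    exact Real.exp_le_exp.2 (mul_le_mul_of_nonneg_left (hXle ω) ht)
  -- mgf of single indicator
  have hmgfY : ∀ i, mgf (Y i) μ l = 1 + (Real.exp l - 1) * c := by
    intro i
    have hA : MeasurableSet (x i ⁻¹' Set.Iic c) := (hmeas i) measurableSet_Iic
    have hμA : μ (x i ⁻¹' Set.Iic c) = ENNReal.ofReal c := by
      rw [← Measure.map_apply (hmeas i) measurableSet_Iic, hunif i,
        Measure.restrict_apply measurableSet_Iic]
      have : Set.Iic c ∩ Set.Ioo (0:ℝ) 1 = Set.Ioc 0 c := by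
        ext y
        simp only [Set.mem_inter_iff, Set.mem_Iic, Set.mem_Ioo, Set.mem_Ioc]
        constructor
        · rintro ⟨h1, h2, h3⟩; exact ⟨h2, h1⟩
        · rintro ⟨h1, h2⟩; exact ⟨h2, h1, by linarith⟩
      rw [this, Real.volume_Ioc]
      norm_num
    have heq : (fun ω => Real.exp (l * Y i ω)) =
        fun ω => (x i ⁻¹' Set.Iic c).indicator (fun _ => Real.exp l - 1) ω + 1 := by
      funext ω
      by_cases h : x i ω ≤ c
      · simp [hYdef, h, Set.indicator_apply]
      · simp [hYdef, h, Set.indicator_apply]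
    rw [mgf, heq, integral_add ((integrable_const _).indicator hA) (integrable_const _),
      integral_indicator_const _ hA, integral_const, measureReal_def, measureReal_def, hμA]
    simp only [smul_eq_mul, measure_univ, ENNReal.toReal_one, one_mul]
    rw [ENNReal.toReal_ofReal hc0.le]
    ring
  -- Chernoff
  have hch := measure_ge_le_exp_mul_mgf (μ := μ) (X := X) (γ * N) hlpos.le (hint l hlpos.le)
  rw [hevent]
  refine hch.trans ?_
  -- mgf bound
  have hmgfX : mgf X μ l = (1 + (Real.exp l - 1) * c) ^ n := by
    rw [hXdef, hYind.mgf_sum hYmeas]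
    simp [hmgfY]
  have hbase_nonneg : (0:ℝ) ≤ 1 + (Real.exp l - 1) * c := by
    nlinarith [Real.exp_pos l, Real.add_one_le_exp l]
  have hmgf_le : mgf X μ l ≤ Real.exp (N * (l * c + v * (Real.exp l - 1 - l))) := by
    rw [hmgfX]
    calc (1 + (Real.exp l - 1) * c) ^ n
        ≤ (Real.exp (l * c + c * (1 - c) * (Real.exp l - 1 - l))) ^ n := by
          exact pow_le_pow_left₀ hbase_nonneg (bern_mgf hc0.le hc1.le hlpos.le) n
      _ = Real.exp (N * (l * c + v * (Real.exp l - 1 - l))) := by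
          rw [← Real.exp_nat_mul]
  calc Real.exp (-l * (γ * N)) * mgf X μ l
      ≤ Real.exp (-l * (γ * N)) * Real.exp (N * (l * c + v * (Real.exp l - 1 - l))) := by
        exact mul_le_mul_of_nonneg_left hmgf_le (Real.exp_pos _).le
    _ = Real.exp (-l * (γ * N) + N * (l * c + v * (Real.exp l - 1 - l))) := by
        rw [← Real.exp_add]
    _ ≤ Real.exp (-(N * s ^ 2) / (2 * w)) := by
        apply Real.exp_le_exp.2
        have hl3 : l < 3 := by
          rw [hldef, div_lt_iff₀ hwpos]
          rw [hwdef]; linarith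
        have hg : Real.exp l - 1 - l ≤ 3 * l ^ 2 / (2 * (3 - l)) := by
          rw [le_div_iff₀ (by linarith : (0:ℝ) < 2 * (3 - l))]
          have := expand_bound hlpos.le
          nlinarith
        have hstep : -l * (γ * N) + N * (l * c + v * (Real.exp l - 1 - l))
            ≤ -l * N * s + N * v * (3 * l ^ 2 / (2 * (3 - l))) := by
          have : -l * (γ * N) + N * (l * c) = -l * N * s := by rw [hsdef]; ring
          nlinarith [mul_nonneg hNpos.le hvpos.le, hg]
        refine hstep.trans (le_of_eq ?_)
        have h3l : 3 - l = 3 * v / w := by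
          rw [hldef]; field_simp; rw [hwdef]; ring
        rw [h3l, hldef]
        field_simp
        ring
  done

lemma my_sqrt_add {p q : ℝ} (hp : 0 ≤ p) (hq : 0 ≤ q) :
    Real.sqrt (p + q) ≤ Real.sqrt p + Real.sqrt q := by
  rw [show p + q = Real.sqrt p ^ 2 + Real.sqrt q ^ 2 by rw [Real.sq_sqrt hp, Real.sq_sqrt hq]]
  calc Real.sqrt _ ≤ Real.sqrt ((Real.sqrt p + Real.sqrt q) ^ 2) := by
        apply Real.sqrt_le_sqrt
        nlinarith [Real.sqrt_nonneg p, Real.sqrt_nonneg q]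
    _ = _ := Real.sqrt_sq (by positivity)

lemma calib {Ω : Type*} [MeasurableSpace Ω] (μ : Measure Ω) [IsProbabilityMeasure μ]
    {n : ℕ} (hn : 0 < n) (x : Fin n → Ω → ℝ)
    (hmeas : ∀ i, Measurable (x i))
    (hind : iIndepFun x μ)
    (hunif : ∀ i, Measure.map (x i) μ = volume.restrict (Set.Ioo (0 : ℝ) 1))
    {γ γ' δ ε : ℝ} (hγ : γ ∈ Set.Ioo (0 : ℝ) 1) (hγ' : γ' ∈ Set.Ioo (0 : ℝ) 1)
    (hδ : δ ∈ Set.Ioo (0 : ℝ) 1) (hε : ε ∈ Set.Ioo (0 : ℝ) 1) :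
    μ {ω | γ ≤ ecdf (fun i => x i ω)
        (γ - (1 - ε)⁻¹ * (ε * |γ - γ'| + Real.sqrt (2 * γ' * (1 - γ') * Real.log (1 / δ) / n) +
          (2 / 3 + 1 / (2 * ε)) * Real.log (1 / δ) / n))} ≤ ENNReal.ofReal δ := by
  obtain ⟨hγ0, hγ1⟩ := hγ
  obtain ⟨hγ'0, hγ'1⟩ := hγ'
  obtain ⟨hδ0, hδ1⟩ := hδ
  obtain ⟨hε0, hε1⟩ := hε
  set N : ℝ := (n : ℝ) with hN
  have hNpos : 0 < N := by rw [hN]; exact_mod_cast hn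
  set L : ℝ := Real.log (1 / δ) with hL
  have hLpos : 0 < L := Real.log_pos (by rw [one_div]; exact one_lt_inv_iff₀.2 ⟨hδ0, hδ1⟩)
  set A : ℝ := |γ - γ'| with hA
  have hA0 : 0 ≤ A := abs_nonneg _
  set v₀ : ℝ := γ' * (1 - γ') with hv₀
  have hv₀pos : 0 < v₀ := mul_pos hγ'0 (by linarith)
  set s : ℝ := (1 - ε)⁻¹ * (ε * A + Real.sqrt (2 * γ' * (1 - γ') * L / N) +
      (2 / 3 + 1 / (2 * ε)) * L / N) with hsdef
  have hsqarg : 2 * γ' * (1 - γ') * L / N = 2 * v₀ * L / N := by rw [hv₀]; ring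
  have hsq0pos : 0 < Real.sqrt (2 * v₀ * L / N) := Real.sqrt_pos.2 (by positivity)
  have h1ε : 0 < 1 - ε := by linarith
  have hspos : 0 < s := by
    rw [hsdef, hsqarg]
    have h23 : 0 < (2 / 3 + 1 / (2 * ε)) * L / N := by positivity
    have : 0 < ε * A + Real.sqrt (2 * v₀ * L / N) + (2 / 3 + 1 / (2 * ε)) * L / N := by
      have := mul_nonneg hε0.le hA0
      positivity
    positivity
  -- the key inequality on s
  have hkey : ∀ c : ℝ, c = γ - s → 0 < c →
      N * s ^ 2 ≥ 2 * (c * (1 - c) + s / 3) * L := by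
    intro c hc hcpos
    have hc1 : c < 1 := by rw [hc]; linarith
    set v : ℝ := c * (1 - c) with hv
    have hv0 : 0 ≤ v := mul_nonneg hcpos.le (by linarith)
    -- v ≤ v₀ + (A + s)
    have hvle : v ≤ v₀ + (A + s) := by
      have h1 : c - γ' ≤ A + s := by
        have : γ - γ' ≤ A := le_abs_self _
        rw [hc]; linarith
      have h2 : γ' - c ≤ A + s := by
        have h' : γ' - γ ≤ A := by
          have := neg_abs_le (γ - γ')
          rw [hA]; linarith
        rw [hc]; linarith
      have hm1 : 1 - c - γ' ≤ 1 := by linarith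
      have hm2 : -1 ≤ 1 - c - γ' := by linarith
      nlinarith [mul_nonneg (by linarith : (0:ℝ) ≤ A + s - (c - γ')) (by linarith : (0:ℝ) ≤ 1 + (1 - c - γ')),
        mul_nonneg (by linarith : (0:ℝ) ≤ A + s + (c - γ')) (by linarith : (0:ℝ) ≤ 1 - (1 - c - γ'))]
    -- s ≥ sqrt(2vL/N) + (2/3)L/N
    set a : ℝ := Real.sqrt (2 * v * L / N) with ha
    set b : ℝ := 2 / 3 * (L / N) with hb
    have hsab : a + b ≤ s := by
      have e1 : a ≤ Real.sqrt (2 * v₀ * L / N) + Real.sqrt (2 * (A + s) * L / N) := by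
        calc a ≤ Real.sqrt (2 * (v₀ + (A + s)) * L / N) := by
              apply Real.sqrt_le_sqrt
              have : (0:ℝ) ≤ 2 * L / N := by positivity
              calc 2 * v * L / N = v * (2 * L / N) := by ring
                _ ≤ (v₀ + (A + s)) * (2 * L / N) := by
                    exact mul_le_mul_of_nonneg_right hvle this
                _ = 2 * (v₀ + (A + s)) * L / N := by ring
          _ ≤ _ := by
              rw [show 2 * (v₀ + (A + s)) * L / N = 2 * v₀ * L / N + 2 * (A + s) * L / N by ring]
              exact my_sqrt_add (by positivity) (by positivity)
      have e2 : Real.sqrt (2 * (A + s) * L / N) ≤ ε * (A + s) + L / (2 * ε * N) := by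
        have hrhs : 0 ≤ ε * (A + s) + L / (2 * ε * N) := by positivity
        calc Real.sqrt (2 * (A + s) * L / N) ≤
            Real.sqrt ((ε * (A + s) + L / (2 * ε * N)) ^ 2) := by
              apply Real.sqrt_le_sqrt
              have hεd : ε * (L / (2 * ε * N)) = L / (2 * N) := by
                field_simp
              have h4 : 4 * ((A + s) * (ε * (L / (2 * ε * N)))) = 2 * (A + s) * L / N := by
                rw [hεd]; ring
              nlinarith [sq_nonneg (ε * (A + s) - L / (2 * ε * N)), h4]
          _ = _ := Real.sqrt_sq hrhs
      have e3 : s = ε * A + ε * s + Real.sqrt (2 * v₀ * L / N) + 2 / 3 * (L / N) + L / (2 * ε * N) := by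
        have h5 : (1 - ε) * s = ε * A + Real.sqrt (2 * v₀ * L / N) + (2 / 3 + 1 / (2 * ε)) * L / N := by
          rw [hsdef, hsqarg]
          exact mul_inv_cancel_left₀ h1ε.ne' _
        have hexp : (2 / 3 + 1 / (2 * ε)) * L / N = 2 / 3 * (L / N) + L / (2 * ε * N) := by
          rw [add_mul, add_div]
          congr 1
          · rw [mul_div_assoc]
          · rw [div_mul_eq_mul_div, one_mul, div_div]
        have h6 : (1 - ε) * s = s - ε * s := by ring
        linarith [h5, hexp, h6]
      have hsplit : ε * (A + s) = ε * A + ε * s := by ring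
      rw [hb]
      linarith [e1, e2, e3, hsplit]
    have ha0 : 0 ≤ a := Real.sqrt_nonneg _
    have hb0 : 0 ≤ b := by positivity
    have hasq : a ^ 2 = 2 * v * L / N := Real.sq_sqrt (by positivity)
    have hs2 : s ^ 2 ≥ a ^ 2 + b * s := by nlinarith
    have : N * s ^ 2 ≥ N * a ^ 2 + N * (b * s) := by nlinarith
    have hNa : N * a ^ 2 = 2 * v * L := by rw [hasq]; field_simp
    have hNb : N * (b * s) = 2 / 3 * L * s := by rw [hb]; field_simp
    rw [hv]
    nlinarith [this, hNa, hNb]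
  -- case split on sign of γ - s
  rcases le_or_gt (γ - s) 0 with hcle | hcpos
  · -- the event is null
    have hsub : {ω | γ ≤ ecdf (fun i => x i ω) (γ - s)} ⊆ ⋃ i, (x i) ⁻¹' Set.Iic (γ - s) := by
      intro ω hω
      simp only [Set.mem_setOf_eq, ecdf] at hω
      by_contra hcon
      simp only [Set.mem_iUnion, Set.mem_preimage, Set.mem_Iic, not_exists, not_le] at hcon
      have : (Finset.univ.filter (fun i => x i ω ≤ γ - s)) = ∅ := by
        apply Finset.filter_false_of_mem
        intro i _
        exact not_le.2 (hcon i)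
      rw [this] at hω
      simp at hω
      linarith
    refine le_trans (measure_mono hsub) ?_
    have : μ (⋃ i, (x i) ⁻¹' Set.Iic (γ - s)) = 0 := by
      apply measure_iUnion_null
      intro i
      rw [← Measure.map_apply (hmeas i) measurableSet_Iic, hunif i,
        Measure.restrict_apply measurableSet_Iic]
      have : Set.Iic (γ - s) ∩ Set.Ioo (0:ℝ) 1 = ∅ := by
        ext y
        simp only [Set.mem_inter_iff, Set.mem_Iic, Set.mem_Ioo, Set.mem_empty_iff_false,
          iff_false, not_and]
        intro h1 h2
        linarith
      rw [this]
      simp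
    rw [this]
    exact zero_le
  · -- Bernstein case
    have hbern := bernstein_core (γ := γ) (c := γ - s) μ hn x hmeas hind hunif hcpos (by linarith) (by linarith)
    have hexp : Real.exp (-(N * (γ - (γ - s)) ^ 2) /
        (2 * ((γ - s) * (1 - (γ - s)) + (γ - (γ - s)) / 3))) ≤ δ := by
      have hkey' := hkey (γ - s) rfl hcpos
      have hw : 0 < (γ - s) * (1 - (γ - s)) + s / 3 := by
        have : 0 < (γ - s) * (1 - (γ - s)) := mul_pos hcpos (by linarith)
        linarith
      have harg : -(N * (γ - (γ - s)) ^ 2) /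
          (2 * ((γ - s) * (1 - (γ - s)) + (γ - (γ - s)) / 3)) ≤ -L := by
        rw [show γ - (γ - s) = s by ring]
        rw [div_le_iff₀ (by linarith : (0:ℝ) < 2 * ((γ - s) * (1 - (γ - s)) + s / 3))]
        nlinarith [hkey']
      calc Real.exp _ ≤ Real.exp (-L) := Real.exp_le_exp.2 harg
        _ = δ := by
          rw [hL, one_div, Real.log_inv, neg_neg, Real.exp_log hδ0]
    have hfin : μ {ω | γ ≤ ecdf (fun i => x i ω) (γ - s)} ≠ ⊤ := measure_ne_top _ _
    rw [← ENNReal.ofReal_toReal hfin]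
    exact ENNReal.ofReal_le_ofReal (hbern.trans hexp)

lemma ecdf_mono {n : ℕ} (x : Fin n → ℝ) : Monotone (ecdf x) := by
  intro t t' htt'
  unfold ecdf
  have hsub : Finset.univ.filter (fun i : Fin n => x i ≤ t) ⊆
      Finset.univ.filter (fun i : Fin n => x i ≤ t') := by
    intro i hi
    simp only [Finset.mem_filter] at hi ⊢
    exact ⟨hi.1, le_trans hi.2 htt'⟩
  have hcard : ((Finset.univ.filter (fun i : Fin n => x i ≤ t)).card : ℝ) ≤
      ((Finset.univ.filter (fun i : Fin n => x i ≤ t')).card : ℝ) := by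
    exact_mod_cast Finset.card_le_card hsub
  gcongr

/-- Concentration of the empirical left quantile with perturbation: for i.i.d.
`Uniform(0,1)` samples, with probability at least `1 - δ`, the left `γ`-quantile of the
empirical distribution falls below `γ` by at most
`min_{ε ∈ (0,1)} (1-ε)⁻¹ [ε|γ-γ'| + √(2γ'(1-γ')log(1/δ)/n) + (2/3 + 1/(2ε))·log(1/δ)/n]`. -/
theorem stmt9 {Ω : Type*} [MeasurableSpace Ω] (μ : Measure Ω) [IsProbabilityMeasure μ]
    {n : ℕ} (hn : 0 < n) (x : Fin n → Ω → ℝ)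
    (hmeas : ∀ i, Measurable (x i))
    (hind : iIndepFun x μ)
    (hunif : ∀ i, Measure.map (x i) μ = volume.restrict (Set.Ioo (0 : ℝ) 1))
    (γ γ' δ : ℝ) (hγ : γ ∈ Set.Ioo (0 : ℝ) 1) (hγ' : γ' ∈ Set.Ioo (0 : ℝ) 1)
    (hδ : δ ∈ Set.Ioo (0 : ℝ) 1) :
    1 - δ ≤ (μ {ω | γ - Qminus γ (ecdf (fun i => x i ω)) ≤
        sInf ((fun ε : ℝ => (1 - ε)⁻¹ *
          (ε * |γ - γ'| + Real.sqrt (2 * γ' * (1 - γ') * Real.log (1 / δ) / n) +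
            (2 / 3 + 1 / (2 * ε)) * Real.log (1 / δ) / n)) '' Set.Ioo (0 : ℝ) 1)}).toReal := by
  set f : ℝ → ℝ := fun ε : ℝ => (1 - ε)⁻¹ *
      (ε * |γ - γ'| + Real.sqrt (2 * γ' * (1 - γ') * Real.log (1 / δ) / n) +
        (2 / 3 + 1 / (2 * ε)) * Real.log (1 / δ) / n) with hf
  set B : Set ℝ := f '' Set.Ioo (0:ℝ) 1 with hB
  have hBne : B.Nonempty := ⟨f (1/2), Set.mem_image_of_mem f (by norm_num)⟩
  set t : ℝ := sInf B with ht
  -- the increasing family of measurable-ish events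
  set G : ℕ → Set Ω := fun k => {ω | γ ≤ ecdf (fun i => x i ω) (γ - t - 1 / (k + 1))} with hG
  have hGmono : Monotone G := by
    intro k m hkm
    intro ω hω
    simp only [hG, Set.mem_setOf_eq] at hω ⊢
    refine hω.trans (ecdf_mono _ ?_)
    have h1 : (1 : ℝ) / (m + 1) ≤ 1 / (k + 1) := by
      apply one_div_le_one_div_of_le
      · positivity
      · exact_mod_cast by exact_mod_cast Nat.add_le_add_right hkm 1
    linarith
  have hsub : {ω | t < γ - Qminus γ (ecdf (fun i => x i ω))} ⊆ ⋃ k, G k := by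
    intro ω hω
    simp only [Set.mem_setOf_eq] at hω
    have hne : Nonempty (Fin n) := Fin.pos_iff_nonempty.1 hn
    have hSne : {y | γ ≤ ecdf (fun i => x i ω) y}.Nonempty := by
      refine ⟨(Finset.univ : Finset (Fin n)).sup' Finset.univ_nonempty (fun i => x i ω), ?_⟩
      simp only [Set.mem_setOf_eq, ecdf]
      have hfil : Finset.univ.filter
          (fun i => x i ω ≤ (Finset.univ : Finset (Fin n)).sup' Finset.univ_nonempty (fun i => x i ω))
          = Finset.univ := by
        apply Finset.filter_true_of_mem
        intro i _
        exact Finset.le_sup' (fun i => x i ω) (Finset.mem_univ i)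
      rw [hfil, Finset.card_univ, Fintype.card_fin,
        div_self (by exact_mod_cast hn.ne' : ((n:ℝ)) ≠ 0)]
      exact hγ.2.le
    have hQlt : sInf {y | γ ≤ ecdf (fun i => x i ω) y} < γ - t := by
      have : Qminus γ (ecdf (fun i => x i ω)) < γ - t := by linarith
      exact this
    obtain ⟨r, hrS, hr⟩ := exists_lt_of_csInf_lt hSne hQlt
    obtain ⟨k, hk⟩ := exists_nat_one_div_lt (by linarith : (0:ℝ) < γ - t - r)
    refine Set.mem_iUnion.2 ⟨k, ?_⟩
    simp only [hG, Set.mem_setOf_eq]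
    refine hrS.trans (ecdf_mono _ ?_)
    push_cast at hk ⊢
    linarith
  -- each G k has measure at most δ
  have hGle : ∀ k, μ (G k) ≤ ENNReal.ofReal δ := by
    intro k
    have hlt : sInf B < t + 1 / (k + 1) := by
      rw [← ht]
      have : (0:ℝ) < 1 / ((k:ℝ) + 1) := by positivity
      linarith
    obtain ⟨b, hbB, hblt⟩ := exists_lt_of_csInf_lt hBne hlt
    obtain ⟨ε, hεI, hεb⟩ := hbB
    have hsubk : G k ⊆ {ω | γ ≤ ecdf (fun i => x i ω) (γ - b)} := by
      intro ω hω
      simp only [hG, Set.mem_setOf_eq] at hω ⊢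
      refine hω.trans (ecdf_mono _ ?_)
      linarith
    refine (measure_mono hsubk).trans ?_
    rw [← hεb]
    exact calib μ hn x hmeas hind hunif hγ hγ' hδ hεI
  -- conclude
  have hbad : μ {ω | t < γ - Qminus γ (ecdf (fun i => x i ω))} ≤ ENNReal.ofReal δ := by
    refine (measure_mono hsub).trans ?_
    rw [hGmono.measure_iUnion]
    exact iSup_le hGle
  have hcompl : {ω | γ - Qminus γ (ecdf (fun i => x i ω)) ≤ t} =
      {ω | t < γ - Qminus γ (ecdf (fun i => x i ω))}ᶜ := by
    ext ω; simp [not_lt]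
  have hunion : (1 : ENNReal) ≤ μ {ω | γ - Qminus γ (ecdf (fun i => x i ω)) ≤ t} + ENNReal.ofReal δ := by
    calc (1 : ENNReal) = μ Set.univ := (measure_univ).symm
      _ ≤ μ ({ω | γ - Qminus γ (ecdf (fun i => x i ω)) ≤ t} ∪
            {ω | t < γ - Qminus γ (ecdf (fun i => x i ω))}) := by
          apply measure_mono
          intro ω _
          rcases le_or_gt (γ - Qminus γ (ecdf (fun i => x i ω))) t with h | h
          · exact Or.inl h
          · exact Or.inr h
      _ ≤ μ {ω | γ - Qminus γ (ecdf (fun i => x i ω)) ≤ t} +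
            μ {ω | t < γ - Qminus γ (ecdf (fun i => x i ω))} := measure_union_le _ _
      _ ≤ _ := by exact add_le_add_right hbad _
  have hge : (1 : ENNReal) - ENNReal.ofReal δ ≤ μ {ω | γ - Qminus γ (ecdf (fun i => x i ω)) ≤ t} :=
    tsub_le_iff_right.2 hunion
  have htoReal := ENNReal.toReal_mono (measure_ne_top _ _) hge
  rw [ENNReal.toReal_sub_of_le (ENNReal.ofReal_le_one.2 hδ.2.le) (by simp)] at htoReal
  simpa [ENNReal.toReal_ofReal hδ.1.le] using htoReal
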